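/- Let H₀ be a complex Hilbert space and let A be a norm-closed subalgebra of B(H₀) possessing a contractive approximate identity. If a Hilbert A-module H is a generator or a cogenerator for the category of Hilbert A-modules, then its representation π_H : A → B(H) is injective. -/

import Mathlib

set_option synthInstance.maxHeartbeats 1000000
set_option maxHeartbeats 2000000

noncomputable section

open Filter

open scoped ENNReal

/-- A contractive approximate identity for a (possibly non-unital) normed algebra `A`:
a net `(e i)`, indexed by a nontrivial filter, with `‖e i‖ ≤ 1` for all `i`, such that
`e i * a → a` and `a * e i → a` in norm for every `a ∈ A`. -/
def HasCAI (A : Type) [NonUnitalNormedRing A] : Prop :=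
  ∃ (ι : Type) (l : Filter ι) (e : ι → A), l.NeBot ∧ (∀ i, ‖e i‖ ≤ 1) ∧
    ∀ a : A, Tendsto (fun i => e i * a) l (nhds a) ∧ Tendsto (fun i => a * e i) l (nhds a)

variable (A : Type) [NonUnitalNormedRing A] [NormedSpace ℂ A] [IsScalarTower ℂ A A]
  [SMulCommClass ℂ A A]

/-- A Hilbert `A`-module structure on the Hilbert space `K`: a contractive algebra
homomorphism `π : A → B(K)` which is nondegenerate, i.e. the linear span of
`{π a x : a ∈ A, x ∈ K}` is dense in `K`. -/
def IsHilbertRep {K : Type} [NormedAddCommGroup K] [InnerProductSpace ℂ K] [CompleteSpace K]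
    (π : A →ₙₐ[ℂ] (K →L[ℂ] K)) : Prop :=
  (∀ a : A, ‖π a‖ ≤ ‖a‖) ∧
  Dense ((Submodule.span ℂ {x : K | ∃ (a : A) (y : K), π a y = x} : Submodule ℂ K) : Set K)

/-- A bounded `A`-module map between Hilbert `A`-modules. -/
def IsModuleMap {K L : Type} [NormedAddCommGroup K] [InnerProductSpace ℂ K]
    [NormedAddCommGroup L] [InnerProductSpace ℂ L]
    (πK : A →ₙₐ[ℂ] (K →L[ℂ] K)) (πL : A →ₙₐ[ℂ] (L →L[ℂ] L)) (T : K →L[ℂ] L) : Prop :=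
  ∀ (a : A) (x : K), T (πK a x) = πL a (T x)

/-- `H` is a generator for the category of Hilbert `A`-modules: for all Hilbert
`A`-modules `K`, `L` and every nonzero bounded `A`-module map `R : K → L` there is a
bounded `A`-module map `V : H → K` with `R ∘ V ≠ 0`. -/
def IsGenerator {H : Type} [NormedAddCommGroup H] [InnerProductSpace ℂ H] [CompleteSpace H]
    (πH : A →ₙₐ[ℂ] (H →L[ℂ] H)) : Prop :=
  ∀ (K L : Type) [NormedAddCommGroup K] [InnerProductSpace ℂ K] [CompleteSpace K]
    [NormedAddCommGroup L] [InnerProductSpace ℂ L] [CompleteSpace L],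
    ∀ (πK : A →ₙₐ[ℂ] (K →L[ℂ] K)) (πL : A →ₙₐ[ℂ] (L →L[ℂ] L)),
      IsHilbertRep A πK → IsHilbertRep A πL →
      ∀ R : K →L[ℂ] L, IsModuleMap A πK πL R → R ≠ 0 →
        ∃ V : H →L[ℂ] K, IsModuleMap A πH πK V ∧ R.comp V ≠ 0

/-- `H` is a cogenerator for the category of Hilbert `A`-modules: for all Hilbert
`A`-modules `K`, `L` and every nonzero bounded `A`-module map `R : K → L` there is a
bounded `A`-module map `V : L → H` with `V ∘ R ≠ 0`. -/
def IsCogenerator {H : Type} [NormedAddCommGroup H] [InnerProductSpace ℂ H] [CompleteSpace H]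
    (πH : A →ₙₐ[ℂ] (H →L[ℂ] H)) : Prop :=
  ∀ (K L : Type) [NormedAddCommGroup K] [InnerProductSpace ℂ K] [CompleteSpace K]
    [NormedAddCommGroup L] [InnerProductSpace ℂ L] [CompleteSpace L],
    ∀ (πK : A →ₙₐ[ℂ] (K →L[ℂ] K)) (πL : A →ₙₐ[ℂ] (L →L[ℂ] L)),
      IsHilbertRep A πK → IsHilbertRep A πL →
      ∀ R : K →L[ℂ] L, IsModuleMap A πK πL R → R ≠ 0 →
        ∃ V : L →L[ℂ] H, IsModuleMap A πL πH V ∧ V.comp R ≠ 0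

instance nonUnitalSubalgebraNormedSpaceCLM (H₀ : Type) [NormedAddCommGroup H₀]
    [InnerProductSpace ℂ H₀] (B : NonUnitalSubalgebra ℂ (H₀ →L[ℂ] H₀)) : NormedSpace ℂ B :=
  SubmoduleClass.toNormedSpace (R := ℂ) B

section HilbGenAux

set_option linter.unusedSectionVars false

namespace HilbGen

variable {𝒜 : Type} [NonUnitalNormedRing 𝒜] [NormedSpace ℂ 𝒜] [IsScalarTower ℂ 𝒜 𝒜]
  [SMulCommClass ℂ 𝒜 𝒜]

/-- Restriction of a representation to an invariant submodule. -/
def restrictHom {K : Type} [NormedAddCommGroup K] [InnerProductSpace ℂ K]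
    (π : 𝒜 →ₙₐ[ℂ] (K →L[ℂ] K)) (W : Submodule ℂ K)
    (hinv : ∀ (c : 𝒜), ∀ x ∈ W, π c x ∈ W) : 𝒜 →ₙₐ[ℂ] (↥W →L[ℂ] ↥W) where
  toFun c := ContinuousLinearMap.codRestrict ((π c).comp W.subtypeL) W (fun x => hinv c x x.2)
  map_add' c d := by ext x; simp; rfl
  map_mul' c d := by ext x; simp [map_mul, ContinuousLinearMap.mul_apply]; rfl
  map_zero' := by ext x; simp
  map_smul' r c := by ext x; simp; rfl

@[simp] lemma restrictHom_apply {K : Type} [NormedAddCommGroup K] [InnerProductSpace ℂ K]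
    (π : 𝒜 →ₙₐ[ℂ] (K →L[ℂ] K)) (W : Submodule ℂ K)
    (hinv : ∀ (c : 𝒜), ∀ x ∈ W, π c x ∈ W) (c : 𝒜) (x : ↥W) :
    (↑(restrictHom π W hinv c x) : K) = π c ↑x := rfl

lemma norm_restrictHom_le {K : Type} [NormedAddCommGroup K] [InnerProductSpace ℂ K]
    (π : 𝒜 →ₙₐ[ℂ] (K →L[ℂ] K)) (W : Submodule ℂ K)
    (hinv : ∀ (c : 𝒜), ∀ x ∈ W, π c x ∈ W) (c : 𝒜) :
    ‖restrictHom π W hinv c‖ ≤ ‖π c‖ := by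
  refine ContinuousLinearMap.opNorm_le_bound _ (norm_nonneg _) (fun x => ?_)
  have h0 : ‖(↑(restrictHom π W hinv c x) : K)‖ = ‖restrictHom π W hinv c x‖ := rfl
  rw [← h0, restrictHom_apply]
  calc ‖π c ↑x‖ ≤ ‖π c‖ * ‖(x : K)‖ := (π c).le_opNorm _
  _ = ‖π c‖ * ‖x‖ := rfl

variable {K : Type} [NormedAddCommGroup K] [InnerProductSpace ℂ K] [CompleteSpace K]

lemma compress_key (π : 𝒜 →ₙₐ[ℂ] (K →L[ℂ] K)) (W : Submodule ℂ K) (hW : IsClosed (W : Set K))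
    (hinv : ∀ (c : 𝒜), ∀ x ∈ W, π c x ∈ W) (c : 𝒜) (z : K) :
    Submodule.orthogonalProjectionOnto Wᗮ (π c z) =
      Submodule.orthogonalProjectionOnto Wᗮ (π c ↑(Submodule.orthogonalProjectionOnto Wᗮ z)) := by
  haveI : CompleteSpace ↥W := hW.completeSpace_coe
  have h1 : z - ↑(Submodule.orthogonalProjectionOnto Wᗮ z) ∈ W := by
    have := Submodule.sub_starProjection_mem_orthogonal (K := Wᗮ) z
    rwa [Submodule.orthogonal_orthogonal] at this
  have h2 : π c (z - ↑(Submodule.orthogonalProjectionOnto Wᗮ z)) ∈ Wᗮᗮ :=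
    Submodule.le_orthogonal_orthogonal W (hinv c _ h1)
  have h3 : Submodule.orthogonalProjectionOnto Wᗮ (π c (z - ↑(Submodule.orthogonalProjectionOnto Wᗮ z))) = 0 :=
    Submodule.orthogonalProjectionOnto_apply_of_mem_orthogonal h2
  have h5 := map_sub (π c) z ↑(Submodule.orthogonalProjectionOnto Wᗮ z)
  have h4 := map_sub (Submodule.orthogonalProjectionOnto Wᗮ) (π c z) (π c ↑(Submodule.orthogonalProjectionOnto Wᗮ z))
  rw [← h5, h3] at h4
  exact sub_eq_zero.mp h4.symm

/-- Compression of a representation to the orthocomplement of an invariant closed submodule. -/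
def compressHom (π : 𝒜 →ₙₐ[ℂ] (K →L[ℂ] K)) (W : Submodule ℂ K) (hW : IsClosed (W : Set K))
    (hinv : ∀ (c : 𝒜), ∀ x ∈ W, π c x ∈ W) : 𝒜 →ₙₐ[ℂ] (↥Wᗮ →L[ℂ] ↥Wᗮ) where
  toFun c := (Submodule.orthogonalProjectionOnto Wᗮ).comp ((π c).comp Wᗮ.subtypeL)
  map_add' c d := by ext x; simp
  map_mul' c d := by
    ext ξ
    simp only [ContinuousLinearMap.comp_apply, ContinuousLinearMap.mul_apply,
      Submodule.subtypeL_apply, map_mul]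
    rw [← compress_key π W hW hinv c (π d ↑ξ)]
  map_zero' := by ext x; simp
  map_smul' r c := by ext x; simp

@[simp] lemma compressHom_apply (π : 𝒜 →ₙₐ[ℂ] (K →L[ℂ] K)) (W : Submodule ℂ K)
    (hW : IsClosed (W : Set K)) (hinv : ∀ (c : 𝒜), ∀ x ∈ W, π c x ∈ W) (c : 𝒜) (ξ : ↥Wᗮ) :
    compressHom π W hW hinv c ξ = Submodule.orthogonalProjectionOnto Wᗮ (π c ↑ξ) := rfl

lemma norm_compressHom_le (π : 𝒜 →ₙₐ[ℂ] (K →L[ℂ] K)) (W : Submodule ℂ K)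
    (hW : IsClosed (W : Set K)) (hinv : ∀ (c : 𝒜), ∀ x ∈ W, π c x ∈ W) (c : 𝒜) :
    ‖compressHom π W hW hinv c‖ ≤ ‖π c‖ := by
  refine ContinuousLinearMap.opNorm_le_bound _ (norm_nonneg _) (fun ξ => ?_)
  rw [compressHom_apply]
  calc ‖Submodule.orthogonalProjectionOnto Wᗮ (π c ↑ξ)‖ ≤ ‖Submodule.orthogonalProjectionOnto Wᗮ‖ * ‖π c ↑ξ‖ :=
        (Submodule.orthogonalProjectionOnto Wᗮ).le_opNorm _
  _ ≤ 1 * ‖π c ↑ξ‖ := mul_le_mul_of_nonneg_right (Submodule.orthogonalProjectionOnto_norm_le Wᗮ) (norm_nonneg _)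
  _ = ‖π c ↑ξ‖ := one_mul _
  _ ≤ ‖π c‖ * ‖(ξ : K)‖ := (π c).le_opNorm _
  _ = ‖π c‖ * ‖ξ‖ := rfl

variable {ι : Type} {l : Filter ι} {e : ι → 𝒜}
variable {E : Type} [NormedAddCommGroup E] [InnerProductSpace ℂ E]

lemma apply_norm_le (π : 𝒜 →ₙₐ[ℂ] (E →L[ℂ] E)) (hcon : ∀ c : 𝒜, ‖π c‖ ≤ ‖c‖) (c : 𝒜) (x : E) :
    ‖π c x‖ ≤ ‖c‖ * ‖x‖ :=
  ((π c).le_opNorm x).trans (mul_le_mul_of_nonneg_right (hcon c) (norm_nonneg x))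

lemma tendsto_gen (π : 𝒜 →ₙₐ[ℂ] (E →L[ℂ] E)) (hcon : ∀ c : 𝒜, ‖π c‖ ≤ ‖c‖)
    (c : 𝒜) (z : E) (htend : Tendsto (fun i => e i * c) l (nhds c)) :
    Tendsto (fun i => π (e i) (π c z)) l (nhds (π c z)) := by
  have hb : ∀ i, ‖π (e i) (π c z) - π c z‖ ≤ ‖e i * c - c‖ * ‖z‖ := by
    intro i
    have h1 : π (e i) (π c z) = π (e i * c) z := by rw [map_mul]; rfl
    have h2 : π (e i * c) z - π c z = π (e i * c - c) z := by rw [map_sub]; rfl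
    rw [h1, h2]
    exact apply_norm_le π hcon _ _
  have hlim : Tendsto (fun i => ‖e i * c - c‖ * ‖z‖) l (nhds 0) := by
    have := (tendsto_iff_norm_sub_tendsto_zero.mp htend).mul_const ‖z‖
    rwa [zero_mul] at this
  rw [tendsto_iff_norm_sub_tendsto_zero]
  exact squeeze_zero (fun i => norm_nonneg _) hb hlim

lemma inv_span (f : E →L[ℂ] E) {s : Set E} (h : ∀ x ∈ s, f x ∈ Submodule.span ℂ s) :
    ∀ x ∈ Submodule.span ℂ s, f x ∈ Submodule.span ℂ s := by
  intro x hx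
  induction hx using Submodule.span_induction with
  | mem y hy => exact h y hy
  | zero => simp
  | add u v hu hv hu' hv' => rw [map_add]; exact Submodule.add_mem _ hu' hv'
  | smul r u hu hu' => rw [map_smul]; exact Submodule.smul_mem _ r hu'

lemma inv_closure (f : E →L[ℂ] E) (p : Submodule ℂ E) (h : ∀ x ∈ p, f x ∈ p) :
    ∀ x ∈ p.topologicalClosure, f x ∈ p.topologicalClosure := by
  intro x hx
  have hx' : x ∈ (p.topologicalClosure : Set E) := hx
  rw [Submodule.topologicalClosure_coe] at hx'
  have h2 : f x ∈ closure (p : Set E) :=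
    map_mem_closure f.continuous hx' (fun y hy => h y hy)
  have h3 : f x ∈ (p.topologicalClosure : Set E) := by
    rw [Submodule.topologicalClosure_coe]; exact h2
  exact h3

lemma strong_cai [CompleteSpace E] (π : 𝒜 →ₙₐ[ℂ] (E →L[ℂ] E)) (hrep : IsHilbertRep 𝒜 π)
    (hl : l.NeBot) (he : ∀ i, ‖e i‖ ≤ 1)
    (hcai : ∀ a : 𝒜, Tendsto (fun i => e i * a) l (nhds a) ∧
      Tendsto (fun i => a * e i) l (nhds a))
    (x : E) : Tendsto (fun i => π (e i) x) l (nhds x) := by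
  have hG : ∀ y ∈ Submodule.span ℂ {x : E | ∃ (a : 𝒜) (z : E), π a z = x},
      Tendsto (fun i => π (e i) y) l (nhds y) := by
    intro y hy
    induction hy using Submodule.span_induction with
    | mem y hy =>
      obtain ⟨a, z, rfl⟩ := hy
      exact tendsto_gen π hrep.1 a z (hcai a).1
    | zero => simpa using tendsto_const_nhds
    | add u v hu hv hu' hv' => simpa using hu'.add hv'
    | smul r u hu hu' => simpa using hu'.const_smul r
  rw [Metric.tendsto_nhds]
  intro ε hε
  obtain ⟨y, hy1, hy2⟩ : ∃ y ∈ (Submodule.span ℂ {x : E | ∃ (a : 𝒜) (z : E), π a z = x} :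
      Submodule ℂ E), dist x y < ε / 3 := by
    obtain ⟨y, hy1, hy2⟩ := Metric.dense_iff.mp hrep.2 x (ε / 3) (by linarith)
    exact ⟨y, hy2, by simpa [Metric.mem_ball, dist_comm] using hy1⟩
  have hty := Metric.tendsto_nhds.mp (hG y hy1) (ε / 3) (by linarith)
  have h3 : ‖x - y‖ < ε / 3 := by rwa [← dist_eq_norm]
  filter_upwards [hty] with i hi
  have hb1 : dist (π (e i) x) (π (e i) y) < ε / 3 := by
    rw [dist_eq_norm, ← map_sub]
    calc ‖π (e i) (x - y)‖ ≤ ‖e i‖ * ‖x - y‖ := apply_norm_le π hrep.1 _ _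
    _ ≤ 1 * ‖x - y‖ := mul_le_mul_of_nonneg_right (he i) (norm_nonneg _)
    _ = ‖x - y‖ := one_mul _
    _ < ε / 3 := h3
  calc dist (π (e i) x) x ≤ dist (π (e i) x) (π (e i) y) + dist (π (e i) y) y + dist y x :=
        dist_triangle4 _ _ _ _
  _ < ε / 3 + ε / 3 + ε / 3 := by
      have h4 : dist y x < ε / 3 := by rwa [dist_comm]
      exact add_lt_add (add_lt_add hb1 hi) h4
  _ = ε := by ring

lemma dense_restrict (π : 𝒜 →ₙₐ[ℂ] (E →L[ℂ] E)) (S : Set E) (W : Submodule ℂ E)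
    (hWS : W = (Submodule.span ℂ S).topologicalClosure)
    (hinv : ∀ (c : 𝒜), ∀ x ∈ W, π c x ∈ W)
    (hl : l.NeBot)
    (hgen : ∀ s ∈ S, Tendsto (fun i => π (e i) s) l (nhds s)) :
    Dense ((Submodule.span ℂ {x : ↥W | ∃ (c : 𝒜) (y : ↥W), restrictHom π W hinv c y = x} :
      Submodule ℂ ↥W) : Set ↥W) := by
  haveI := hl
  set X : Submodule ℂ ↥W :=
    Submodule.span ℂ {x : ↥W | ∃ (c : 𝒜) (y : ↥W), restrictHom π W hinv c y = x} with hX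
  set Xbar := X.topologicalClosure with hXbar
  have hsub : Submodule.span ℂ S ≤ W := hWS ▸ Submodule.le_topologicalClosure _
  have step1 : ∀ s (hs : s ∈ S) (h : s ∈ W), (⟨s, h⟩ : ↥W) ∈ Xbar := by
    intro s hs h
    have hcl : (⟨s, h⟩ : ↥W) ∈ closure (X : Set ↥W) := by
      refine mem_closure_of_tendsto (b := l)
        (f := fun i => restrictHom π W hinv (e i) ⟨s, h⟩) ?_ ?_
      · rw [tendsto_subtype_rng]
        exact hgen s hs
      · exact Eventually.of_forall fun i => Submodule.subset_span ⟨e i, ⟨s, h⟩, rfl⟩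
    have hset : (Xbar : Set ↥W) = closure (X : Set ↥W) := Submodule.topologicalClosure_coe X
    rw [← hset] at hcl
    exact hcl
  have step2 : ∀ y (hy : y ∈ Submodule.span ℂ S) (h : y ∈ W), (⟨y, h⟩ : ↥W) ∈ Xbar := by
    intro y hy
    induction hy using Submodule.span_induction with
    | mem s hs => exact step1 s hs
    | zero => intro h; exact Xbar.zero_mem
    | add u v hu hv hu' hv' =>
      intro h
      have heq : (⟨u + v, h⟩ : ↥W) = ⟨u, hsub hu⟩ + ⟨v, hsub hv⟩ := rfl
      rw [heq]; exact Xbar.add_mem (hu' (hsub hu)) (hv' (hsub hv))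
    | smul r u hu hu' =>
      intro h
      have heq : (⟨r • u, h⟩ : ↥W) = r • (⟨u, hsub hu⟩ : ↥W) := rfl
      rw [heq]; exact Xbar.smul_mem r (hu' (hsub hu))
  intro ξ
  have hmem : ξ ∈ Xbar := by
    have h1 : (↑ξ : E) ∈ closure ((Submodule.span ℂ S : Submodule ℂ E) : Set E) := by
      have h0 : (↑ξ : E) ∈ ((Submodule.span ℂ S).topologicalClosure : Set E) := by
        rw [SetLike.mem_coe, ← hWS]; exact ξ.2
      rwa [Submodule.topologicalClosure_coe] at h0
    have h2 : ξ ∈ closure (Xbar : Set ↥W) := by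
      rw [Metric.mem_closure_iff]
      intro ε hε
      obtain ⟨y, hy1, hy2⟩ := Metric.mem_closure_iff.mp h1 ε hε
      refine ⟨⟨y, hsub hy1⟩, step2 y hy1 _, ?_⟩
      rwa [Subtype.dist_eq]
    rwa [X.isClosed_topologicalClosure.closure_eq] at h2
  have hset : (Xbar : Set ↥W) = closure (X : Set ↥W) := Submodule.topologicalClosure_coe X
  rw [← hset]
  exact hmem

end HilbGen

end HilbGenAux


/-- If `A` is a norm-closed subalgebra of `B(H₀)` with a contractive approximate identity
and the Hilbert `A`-module `H` is a generator or a cogenerator for the category of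
Hilbert `A`-modules, then its representation `πH : A → B(H)` is injective. -/
theorem generator_or_cogenerator_faithful
    (H₀ : Type) [NormedAddCommGroup H₀] [InnerProductSpace ℂ H₀] [CompleteSpace H₀]
    (B : NonUnitalSubalgebra ℂ (H₀ →L[ℂ] H₀)) (hB : IsClosed (B : Set (H₀ →L[ℂ] H₀)))
    (hcai : HasCAI ↥B)
    (H : Type) [NormedAddCommGroup H] [InnerProductSpace ℂ H] [CompleteSpace H]
    (πH : ↥B →ₙₐ[ℂ] (H →L[ℂ] H)) (hrep : IsHilbertRep ↥B πH)
    (h : IsGenerator ↥B πH ∨ IsCogenerator ↥B πH) :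
    Function.Injective ⇑πH := by
  classical
  obtain ⟨ι, l, e, hl, he, hca⟩ := hcai
  haveI := hl
  set π₀ : ↥B →ₙₐ[ℂ] (H₀ →L[ℂ] H₀) := NonUnitalSubalgebraClass.subtype B with hπ₀
  have hπ₀con : ∀ c : ↥B, ‖π₀ c‖ ≤ ‖c‖ := fun c => le_of_eq rfl
  set S₀ : Set H₀ := {x : H₀ | ∃ (b : ↥B) (y : H₀), (b : H₀ →L[ℂ] H₀) y = x} with hS₀
  set K₀ : Submodule ℂ H₀ := (Submodule.span ℂ S₀).topologicalClosure with hK₀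
  have hspaninv : ∀ c : ↥B, ∀ x ∈ Submodule.span ℂ S₀, π₀ c x ∈ Submodule.span ℂ S₀ := by
    intro c
    apply HilbGen.inv_span
    rintro x ⟨b, y, rfl⟩
    refine Submodule.subset_span ⟨c * b, y, ?_⟩
    rw [MulMemClass.coe_mul]
    rfl
  have hK₀inv : ∀ c : ↥B, ∀ x ∈ K₀, π₀ c x ∈ K₀ := fun c =>
    HilbGen.inv_closure (π₀ c) _ (hspaninv c)
  haveI hK₀c : CompleteSpace ↥K₀ :=
    (Submodule.isClosed_topologicalClosure _).completeSpace_coe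
  set πK := HilbGen.restrictHom π₀ K₀ hK₀inv with hπK
  have hπKcon : ∀ c : ↥B, ‖πK c‖ ≤ ‖c‖ := fun c =>
    (HilbGen.norm_restrictHom_le π₀ K₀ hK₀inv c).trans (hπ₀con c)
  have hgen0 : ∀ s ∈ S₀, Filter.Tendsto (fun i => π₀ (e i) s) l (nhds s) := by
    rintro s ⟨b, y, rfl⟩
    exact HilbGen.tendsto_gen π₀ hπ₀con b y (hca b).1
  have hrepK : IsHilbertRep ↥B πK :=
    ⟨hπKcon, HilbGen.dense_restrict π₀ S₀ K₀ hK₀ hK₀inv hl hgen0⟩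
  have hstrong := HilbGen.strong_cai πK hrepK hl he hca
  -- faithfulness of `πK`
  have hfaith : ∀ c : ↥B, πK c = 0 → c = 0 := by
    intro c hc
    have hzero : ∀ i, c * e i = (0 : ↥B) := by
      intro i
      apply Subtype.ext
      apply ContinuousLinearMap.ext
      intro y
      have hmem : (e i : H₀ →L[ℂ] H₀) y ∈ K₀ :=
        Submodule.le_topologicalClosure _ (Submodule.subset_span ⟨e i, y, rfl⟩)
      have h1 : πK c ⟨(e i : H₀ →L[ℂ] H₀) y, hmem⟩ = 0 := by rw [hc]; rfl
      have h2 : (c : H₀ →L[ℂ] H₀) ((e i : H₀ →L[ℂ] H₀) y) = 0 := congrArg Subtype.val h1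
      simpa [MulMemClass.coe_mul, ContinuousLinearMap.mul_apply] using h2
    have h1 := (hca c).2
    have h2 : Filter.Tendsto (fun i => c * e i) l (nhds (0 : ↥B)) := by
      simp only [hzero]; exact tendsto_const_nhds
    exact tendsto_nhds_unique h1 h2
  -- `πH a = 0` implies `πK a = 0`
  have key : ∀ a : ↥B, πH a = 0 → πK a = 0 := by
    intro a ha
    by_contra hKa
    obtain ⟨x, hx⟩ : ∃ x : ↥K₀, πK a x ≠ 0 := by
      by_contra hall
      push_neg at hall
      exact hKa (ContinuousLinearMap.ext hall)
    rcases h with hgen | hcog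
    · -- generator case
      set M : Submodule ℂ ↥K₀ :=
        { carrier := {z : ↥K₀ | ∀ b : ↥B, πH b = 0 → πK b z = 0}
          add_mem' := fun {u v} hu hv b hb => by
            rw [map_add, hu b hb, hv b hb, add_zero]
          zero_mem' := fun b hb => map_zero _
          smul_mem' := fun r u hu b hb => by rw [map_smul, hu b hb, smul_zero] } with hM
      have hMclosed : IsClosed (M : Set ↥K₀) := by
        have hMeq : (M : Set ↥K₀) =
            ⋂ (b : ↥B), ⋂ (_ : πH b = 0), {z : ↥K₀ | πK b z = 0} := by
          ext z
          simp only [Set.mem_iInter, Set.mem_setOf_eq, SetLike.mem_coe]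
          rfl
        rw [hMeq]
        exact isClosed_iInter fun b => isClosed_iInter fun hb =>
          isClosed_eq (πK b).continuous continuous_const
      have hMinv : ∀ c : ↥B, ∀ z ∈ M, πK c z ∈ M := by
        intro c z hz b hb
        have h1 : πK b (πK c z) = πK (b * c) z := by rw [map_mul]; rfl
        rw [h1]
        exact hz (b * c) (by rw [map_mul, hb, zero_mul])
      haveI : CompleteSpace ↥Mᗮ := (Submodule.isClosed_orthogonal M).completeSpace_coe
      haveI : CompleteSpace ↥M := hMclosed.completeSpace_coe
      set πL := HilbGen.compressHom πK M hMclosed hMinv with hπL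
      have hπLcon : ∀ c : ↥B, ‖πL c‖ ≤ ‖c‖ := fun c =>
        (HilbGen.norm_compressHom_le πK M hMclosed hMinv c).trans (hπKcon c)
      have hLtend : ∀ ξ : ↥Mᗮ, Filter.Tendsto (fun i => πL (e i) ξ) l (nhds ξ) := by
        intro ξ
        have h1 : Filter.Tendsto (fun i => πK (e i) ↑ξ) l (nhds (↑ξ : ↥K₀)) := hstrong ↑ξ
        have h2 : Filter.Tendsto (fun i => Submodule.orthogonalProjectionOnto Mᗮ (πK (e i) ↑ξ)) l
            (nhds (Submodule.orthogonalProjectionOnto Mᗮ ↑ξ)) :=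
          ((Submodule.orthogonalProjectionOnto Mᗮ).continuous.tendsto _).comp h1
        rwa [Submodule.orthogonalProjectionOnto_mem_subspace_eq_self ξ] at h2
      have hrepL : IsHilbertRep ↥B πL := by
        refine ⟨hπLcon, ?_⟩
        intro ξ
        refine mem_closure_of_tendsto (f := fun i => πL (e i) ξ) (hLtend ξ) ?_
        exact Filter.Eventually.of_forall fun i => Submodule.subset_span ⟨e i, ξ, rfl⟩
      set R : ↥K₀ →L[ℂ] ↥Mᗮ := Submodule.orthogonalProjectionOnto Mᗮ with hR
      have hRmod : IsModuleMap ↥B πK πL R := by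
        intro c z
        exact HilbGen.compress_key πK M hMclosed hMinv c z
      have hRne : R ≠ 0 := by
        intro h0
        have hMbot : Mᗮ = ⊥ := by
          rw [Submodule.eq_bot_iff]
          intro ξ hξ
          have h1 : R (↑(⟨ξ, hξ⟩ : ↥Mᗮ)) = ⟨ξ, hξ⟩ :=
            Submodule.orthogonalProjectionOnto_mem_subspace_eq_self _
          rw [h0] at h1
          have h2 : (⟨ξ, hξ⟩ : ↥Mᗮ) = 0 := by simpa using h1.symm
          simpa using congrArg Subtype.val h2
        have hMtop : M = ⊤ := Submodule.orthogonal_eq_bot_iff.mp hMbot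
        have hxM : x ∈ M := by rw [hMtop]; trivial
        exact hx (hxM a ha)
      obtain ⟨V, hVmod, hRV⟩ := hgen ↥K₀ ↥Mᗮ πK πL hrepK hrepL R hRmod hRne
      apply hRV
      apply ContinuousLinearMap.ext
      intro z
      have hVz : V z ∈ M := by
        intro b hb
        have h1 := hVmod b z
        rw [hb] at h1
        simpa using h1.symm
      have h2 : R (V z) = 0 :=
        Submodule.orthogonalProjectionOnto_apply_of_mem_orthogonal
          (Submodule.le_orthogonal_orthogonal M hVz)
      simpa [ContinuousLinearMap.comp_apply] using h2
    · -- cogenerator case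
      set SN : Set ↥K₀ :=
        {z : ↥K₀ | ∃ b : ↥B, πH b = 0 ∧ ∃ y : ↥K₀, πK b y = z} with hSN
      set N : Submodule ℂ ↥K₀ := (Submodule.span ℂ SN).topologicalClosure with hN
      have hNspaninv : ∀ c : ↥B, ∀ z ∈ Submodule.span ℂ SN,
          πK c z ∈ Submodule.span ℂ SN := by
        intro c
        apply HilbGen.inv_span
        rintro z ⟨b, hb, y, rfl⟩
        refine Submodule.subset_span ⟨c * b, ?_, y, ?_⟩
        · rw [map_mul, hb, mul_zero]
        · rw [map_mul]; rfl
      have hNinv : ∀ c : ↥B, ∀ z ∈ N, πK c z ∈ N := fun c =>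
        HilbGen.inv_closure (πK c) _ (hNspaninv c)
      haveI hNc : CompleteSpace ↥N :=
        (Submodule.isClosed_topologicalClosure _).completeSpace_coe
      set πN := HilbGen.restrictHom πK N hNinv with hπN
      have hrepN : IsHilbertRep (K := ↥N) ↥B πN := by
        refine ⟨fun c => (HilbGen.norm_restrictHom_le πK N hNinv c).trans (hπKcon c), ?_⟩
        intro ξ
        refine mem_closure_of_tendsto (b := l) (f := fun i => πN (e i) ξ) ?_ ?_
        · rw [tendsto_subtype_rng]
          exact hstrong ↑ξ
        · exact Filter.Eventually.of_forall fun i => Submodule.subset_span ⟨e i, ξ, rfl⟩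
      set R : ↥N →L[ℂ] ↥K₀ := N.subtypeL with hR
      have hRmod : IsModuleMap (K := ↥N) (L := ↥K₀) ↥B πN πK R := by intro c z; rfl
      have hRne : R ≠ 0 := by
        intro h0
        have hmem : πK a x ∈ N :=
          Submodule.le_topologicalClosure _ (Submodule.subset_span ⟨a, ha, x, rfl⟩)
        have h1 : R ⟨πK a x, hmem⟩ = πK a x := rfl
        rw [h0] at h1
        exact hx (by simpa using h1.symm)
      have h1' := hcog ↥N ↥K₀ πN πK
      have h2' := h1' hrepN
      have h3' := h2' hrepK
      have h4' := h3' R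
      have h5' := h4' hRmod
      obtain ⟨V, hVmod, hVR⟩ := h5' hRne
      apply hVR
      apply ContinuousLinearMap.ext
      intro ξ
      have hNker : N ≤ LinearMap.ker (V : ↥K₀ →ₗ[ℂ] H) := by
        apply Submodule.topologicalClosure_minimal
        · rw [Submodule.span_le]
          rintro z ⟨b, hb, y, rfl⟩
          rw [SetLike.mem_coe, LinearMap.mem_ker]
          have h1 := hVmod b y
          rw [hb] at h1
          simpa using h1
        · exact ContinuousLinearMap.isClosed_ker _
      have hz : V ↑ξ = 0 := LinearMap.mem_ker.mp (hNker ξ.2)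
      simpa [ContinuousLinearMap.comp_apply, hR] using hz
  -- conclude injectivity
  intro u v huv
  have h1 : πH (u - v) = 0 := by rw [map_sub, huv, sub_self]
  have h2 : πK (u - v) = 0 := key _ h1
  have h3 : u - v = 0 := hfaith _ h2
  exact sub_eq_zero.mp h3
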